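/- arXiv:math/0408045 — 2 statements merged into one kernel-verified Lean document; each statement's English description precedes it below -/
import Mathlib

section
/- For every positive rational number r = m/(n+1) with m, n positive integers, there exists a finite double groupoid T satisfying the filling condition together with a box A such that the square of the antipode of the weak Hopf algebra kT satisfies S²(A) = r·A. Concretely: take P = {P,Q,R,S_1,…,S_m,T_1,…,T_n}, H the equivalence-relation groupoid of the partition {P,Q,T_1,…,T_n} ∪ {R,S_1,…,S_m}, V that of {P,R} ∪ {Q,S_1,…,S_m,T_1,…,T_n}, and T the double groupoid of commuting squares in P×P with horizontal arrows in H and vertical arrows in V; then θ(P)=θ(R)=1, θ(Q)=θ(T_i)=n+1, θ(S_j)=m; and the box with top (P,Q) and bottom (R,S_1) satisfies S²(A) = (m/(n+1))A. -/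
/-- A (finite) groupoid, presented algebraically: a set `A` of arrows over a base `P`,
with source `s`, target `e`, identities, a (total, junk-valued when undefined)
composition, and inverses. Composition is written left to right: `comp a b` is
defined when `e a = s b`. -/
structure Gpd (P : Type) (A : Type) where
  s : A → P
  e : A → P
  id : P → A
  comp : A → A → A
  inv : A → A
  s_id : ∀ p, s (id p) = p
  e_id : ∀ p, e (id p) = p
  s_comp : ∀ a b, e a = s b → s (comp a b) = s a
  e_comp : ∀ a b, e a = s b → e (comp a b) = e b
  id_comp : ∀ a, comp (id (s a)) a = a
  comp_id : ∀ a, comp a (id (e a)) = a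
  comp_assoc : ∀ a b c, e a = s b → e b = s c →
    comp (comp a b) c = comp a (comp b c)
  s_inv : ∀ a, s (inv a) = e a
  e_inv : ∀ a, e (inv a) = s a
  inv_comp : ∀ a, comp (inv a) a = id (e a)
  comp_inv : ∀ a, comp a (inv a) = id (s a)

/-- A finite double groupoid: boxes `B`, horizontal arrows `H`, vertical arrows `V`,
points `P`; boxes carry a horizontal groupoid structure over `V`
(source = left side, target = right side) and a vertical groupoid structure over `H`
(source = top side, target = bottom side), compatible with the side groupoids,
satisfying the interchange law. -/
structure DoubleGroupoid where
  P : Type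
  H : Type
  V : Type
  B : Type
  [fP : Fintype P]
  [fH : Fintype H]
  [fV : Fintype V]
  [fB : Fintype B]
  [dP : DecidableEq P]
  [dH : DecidableEq H]
  [dV : DecidableEq V]
  [dB : DecidableEq B]
  /-- horizontal arrows: source `s` = left point, target `e` = right point -/
  gH : Gpd P H
  /-- vertical arrows: source `s` = top point, target `e` = bottom point -/
  gV : Gpd P V
  /-- horizontal composition of boxes; base `V`, source = left side, target = right side -/
  gBh : Gpd V B
  /-- vertical composition of boxes; base `H`, source = top side, target = bottom side -/
  gBv : Gpd H B
  corner_tl : ∀ A, gH.s (gBv.s A) = gV.s (gBh.s A)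
  corner_tr : ∀ A, gH.e (gBv.s A) = gV.s (gBh.e A)
  corner_bl : ∀ A, gH.s (gBv.e A) = gV.e (gBh.s A)
  corner_br : ∀ A, gH.e (gBv.e A) = gV.e (gBh.e A)
  t_hcomp : ∀ A B, gBh.e A = gBh.s B →
    gBv.s (gBh.comp A B) = gH.comp (gBv.s A) (gBv.s B)
  b_hcomp : ∀ A B, gBh.e A = gBh.s B →
    gBv.e (gBh.comp A B) = gH.comp (gBv.e A) (gBv.e B)
  l_vcomp : ∀ A B, gBv.e A = gBv.s B →
    gBh.s (gBv.comp A B) = gV.comp (gBh.s A) (gBh.s B)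
  r_vcomp : ∀ A B, gBv.e A = gBv.s B →
    gBh.e (gBv.comp A B) = gV.comp (gBh.e A) (gBh.e B)
  t_idh : ∀ g, gBv.s (gBh.id g) = gH.id (gV.s g)
  b_idh : ∀ g, gBv.e (gBh.id g) = gH.id (gV.e g)
  l_idv : ∀ x, gBh.s (gBv.id x) = gV.id (gH.s x)
  r_idv : ∀ x, gBh.e (gBv.id x) = gV.id (gH.e x)
  t_hinv : ∀ A, gBv.s (gBh.inv A) = gH.inv (gBv.s A)
  b_hinv : ∀ A, gBv.e (gBh.inv A) = gH.inv (gBv.e A)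
  l_vinv : ∀ A, gBh.s (gBv.inv A) = gV.inv (gBh.s A)
  r_vinv : ∀ A, gBh.e (gBv.inv A) = gV.inv (gBh.e A)
  hinv_vinv : ∀ A, gBh.inv (gBv.inv A) = gBv.inv (gBh.inv A)
  idh_vcomp : ∀ g h, gV.e g = gV.s h →
    gBv.comp (gBh.id g) (gBh.id h) = gBh.id (gV.comp g h)
  idv_hcomp : ∀ x y, gH.e x = gH.s y →
    gBh.comp (gBv.id x) (gBv.id y) = gBv.id (gH.comp x y)
  id_id : ∀ p, gBh.id (gV.id p) = gBv.id (gH.id p)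
  interchange : ∀ A B C D,
    gBh.e A = gBh.s B → gBh.e C = gBh.s D →
    gBv.e A = gBv.s C → gBv.e B = gBv.s D →
    gBv.comp (gBh.comp A B) (gBh.comp C D) =
      gBh.comp (gBv.comp A C) (gBv.comp B D)

namespace DoubleGroupoid

instance (T : DoubleGroupoid) : Fintype T.P := T.fP
instance (T : DoubleGroupoid) : Fintype T.H := T.fH
instance (T : DoubleGroupoid) : Fintype T.V := T.fV
instance (T : DoubleGroupoid) : Fintype T.B := T.fB
instance (T : DoubleGroupoid) : DecidableEq T.P := T.dP
instance (T : DoubleGroupoid) : DecidableEq T.H := T.dH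
instance (T : DoubleGroupoid) : DecidableEq T.V := T.dV
instance (T : DoubleGroupoid) : DecidableEq T.B := T.dB

variable (T : DoubleGroupoid)

/-- top side of a box -/
def top (A : T.B) : T.H := T.gBv.s A
/-- bottom side of a box -/
def bot (A : T.B) : T.H := T.gBv.e A
/-- left side of a box -/
def left (A : T.B) : T.V := T.gBh.s A
/-- right side of a box -/
def right (A : T.B) : T.V := T.gBh.e A

/-- horizontal composition -/
def hcomp (A B : T.B) : T.B := T.gBh.comp A B
/-- vertical composition ("A over B") -/
def vcomp (A B : T.B) : T.B := T.gBv.comp A B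
/-- horizontal inverse -/
def hinv (A : T.B) : T.B := T.gBh.inv A
/-- vertical inverse -/
def vinv (A : T.B) : T.B := T.gBv.inv A
/-- total inverse `A⁻¹ = (Aʰ)ᵛ` -/
def tinv (A : T.B) : T.B := T.gBv.inv (T.gBh.inv A)

/-- top-left vertex -/
def tl (A : T.B) : T.P := T.gH.s (T.top A)
/-- top-right vertex -/
def tr (A : T.B) : T.P := T.gH.e (T.top A)
/-- bottom-left vertex -/
def bl (A : T.B) : T.P := T.gH.s (T.bot A)
/-- bottom-right vertex -/
def br (A : T.B) : T.P := T.gH.e (T.bot A)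
/-- right-top vertex (equal to `tr` by the corner compatibilities) -/
def rt (A : T.B) : T.P := T.gV.s (T.right A)
/-- right-bottom vertex -/
def rb (A : T.B) : T.P := T.gV.e (T.right A)
/-- left-top vertex -/
def lt (A : T.B) : T.P := T.gV.s (T.left A)
/-- left-bottom vertex -/
def lb (A : T.B) : T.P := T.gV.e (T.left A)

/-- upper-left corner function: number of boxes with the same left and top sides -/
noncomputable def ulc (A : T.B) : ℕ :=
  Nat.card {U : T.B // T.left U = T.left A ∧ T.top U = T.top A}
/-- upper-right corner function: number of boxes with the same right and top sides -/
noncomputable def urc (A : T.B) : ℕ :=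
  Nat.card {U : T.B // T.right U = T.right A ∧ T.top U = T.top A}
/-- lower-left corner function: number of boxes with the same left and bottom sides -/
noncomputable def llc (A : T.B) : ℕ :=
  Nat.card {U : T.B // T.left U = T.left A ∧ T.bot U = T.bot A}
/-- lower-right corner function: number of boxes with the same right and bottom sides -/
noncomputable def lrc (A : T.B) : ℕ :=
  Nat.card {U : T.B // T.right U = T.right A ∧ T.bot U = T.bot A}

/-- the double identity box `Θ_P` at a point -/
def thetaBox (p : T.P) : T.B := T.gBv.id (T.gH.id p)

/-- the filling condition: every compatible pair (right side, top side) bounds a box -/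
def Filling : Prop :=
  ∀ (g : T.V) (x : T.H), T.gH.e x = T.gV.s g →
    ∃ A : T.B, T.top A = x ∧ T.right A = g

/-- membership in the core groupoid `D`: the left and bottom sides are identities -/
def isCoreD (D : T.B) : Prop :=
  T.left D = T.gV.id (T.gV.s (T.left D)) ∧ T.bot D = T.gH.id (T.gH.s (T.bot D))

/-- membership in the core groupoid `E`: the right and top sides are identities -/
def isCoreE (E : T.B) : Prop :=
  T.right E = T.gV.id (T.gV.s (T.right E)) ∧ T.top E = T.gH.id (T.gH.s (T.top E))

/-- `θ(p)`: the number of boxes whose left and bottom sides are identities at `p` -/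
noncomputable def thetaLB (p : T.P) : ℕ :=
  Nat.card {U : T.B // T.left U = T.gV.id p ∧ T.bot U = T.gH.id p}

end DoubleGroupoid

/-- the antipode `S(A) = (⌜(A)/⌞(A)) A⁻¹` of the weak Hopf algebra `kT`,
as a linear map on the span of the boxes. -/
noncomputable def DoubleGroupoid.amap (k : Type) [Field k] (T : DoubleGroupoid) :
    (T.B →₀ k) →ₗ[k] (T.B →₀ k) :=
  Finsupp.lsum k fun A => LinearMap.toSpanSingleton k (T.B →₀ k)
    (((T.ulc A : k) / (T.llc A : k)) • Finsupp.single (T.tinv A) (1 : k))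

section Construction

variable {P : Type} [Fintype P] [DecidableEq P]

/-- arrows of the equivalence-relation groupoid determined by a class function -/
abbrev Arr (f : P → Bool) := {p : P × P // f p.1 = f p.2}

def arrGpd (f : P → Bool) : Gpd P (Arr f) where
  s a := a.1.1
  e a := a.1.2
  id p := ⟨(p, p), rfl⟩
  comp a b := if h : a.1.2 = b.1.1 then ⟨(a.1.1, b.1.2), by rw [a.2, h, b.2]⟩ else a
  inv a := ⟨(a.1.2, a.1.1), a.2.symm⟩
  s_id p := rfl
  e_id p := rfl
  s_comp a b h := by simp [dif_pos h]
  e_comp a b h := by simp [dif_pos h]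
  id_comp a := by rcases a with ⟨⟨p, q⟩, h⟩; simp
  comp_id a := by rcases a with ⟨⟨p, q⟩, h⟩; simp
  comp_assoc a b c hab hbc := by
    rcases a with ⟨⟨p, q⟩, ha⟩; rcases b with ⟨⟨q', r⟩, hb⟩; rcases c with ⟨⟨r', t⟩, hc⟩
    simp_all
  s_inv a := rfl
  e_inv a := rfl
  inv_comp a := by rcases a with ⟨⟨p, q⟩, h⟩; simp
  comp_inv a := by rcases a with ⟨⟨p, q⟩, h⟩; simp

/-- a commuting square: ((tl,tr),(bl,br)) with top/bottom in `f`-classes and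
left/right in `g`-classes -/
def BoxCond (f g : P → Bool) (x : (P × P) × (P × P)) : Prop :=
  f x.1.1 = f x.1.2 ∧ f x.2.1 = f x.2.2 ∧ g x.1.1 = g x.2.1 ∧ g x.1.2 = g x.2.2

abbrev BoxT (f g : P → Bool) := {x : (P × P) × (P × P) // BoxCond f g x}

def boxH (f g : P → Bool) : Gpd (Arr g) (BoxT f g) where
  s A := ⟨(A.1.1.1, A.1.2.1), A.2.2.2.1⟩
  e A := ⟨(A.1.1.2, A.1.2.2), A.2.2.2.2⟩
  id v := ⟨((v.1.1, v.1.1), (v.1.2, v.1.2)), ⟨rfl, rfl, v.2, v.2⟩⟩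
  comp A B := if h : A.1.1.2 = B.1.1.1 ∧ A.1.2.2 = B.1.2.1 then
      ⟨((A.1.1.1, B.1.1.2), (A.1.2.1, B.1.2.2)),
        ⟨by rw [A.2.1, h.1, B.2.1], by rw [A.2.2.1, h.2, B.2.2.1],
         A.2.2.2.1, B.2.2.2.2⟩⟩
    else A
  inv A := ⟨((A.1.1.2, A.1.1.1), (A.1.2.2, A.1.2.1)),
    ⟨A.2.1.symm, A.2.2.1.symm, A.2.2.2.2, A.2.2.2.1⟩⟩
  s_id v := rfl
  e_id v := rfl
  s_comp A B h := by
    have h' := congrArg Subtype.val h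
    simp only [Prod.mk.injEq] at h'
    simp [dif_pos h']
  e_comp A B h := by
    have h' := congrArg Subtype.val h
    simp only [Prod.mk.injEq] at h'
    simp [dif_pos h']
  id_comp A := by
    rcases A with ⟨⟨⟨a, b⟩, ⟨c, d⟩⟩, hA⟩; simp
  comp_id A := by
    rcases A with ⟨⟨⟨a, b⟩, ⟨c, d⟩⟩, hA⟩; simp
  comp_assoc A B C hab hbc := by
    have h1 := congrArg Subtype.val hab
    have h2 := congrArg Subtype.val hbc
    rcases A with ⟨⟨⟨a1, a2⟩, ⟨a3, a4⟩⟩, hA⟩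
    rcases B with ⟨⟨⟨b1, b2⟩, ⟨b3, b4⟩⟩, hB⟩
    rcases C with ⟨⟨⟨c1, c2⟩, ⟨c3, c4⟩⟩, hC⟩
    simp_all
  s_inv A := rfl
  e_inv A := rfl
  inv_comp A := by
    rcases A with ⟨⟨⟨a, b⟩, ⟨c, d⟩⟩, hA⟩; simp
  comp_inv A := by
    rcases A with ⟨⟨⟨a, b⟩, ⟨c, d⟩⟩, hA⟩; simp

def boxV (f g : P → Bool) : Gpd (Arr f) (BoxT f g) where
  s A := ⟨A.1.1, A.2.1⟩
  e A := ⟨A.1.2, A.2.2.1⟩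
  id x := ⟨(x.1, x.1), ⟨x.2, x.2, rfl, rfl⟩⟩
  comp A B := if h : A.1.2 = B.1.1 then
      ⟨(A.1.1, B.1.2),
        ⟨A.2.1, B.2.2.1,
         by rw [A.2.2.2.1, show A.1.2.1 = B.1.1.1 from congrArg Prod.fst h, B.2.2.2.1],
         by rw [A.2.2.2.2, show A.1.2.2 = B.1.1.2 from congrArg Prod.snd h, B.2.2.2.2]⟩⟩
    else A
  inv A := ⟨(A.1.2, A.1.1), ⟨A.2.2.1, A.2.1, A.2.2.2.1.symm, A.2.2.2.2.symm⟩⟩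
  s_id x := rfl
  e_id x := rfl
  s_comp A B h := by
    have h' := congrArg Subtype.val h
    simp [dif_pos h']
  e_comp A B h := by
    have h' := congrArg Subtype.val h
    simp [dif_pos h']
  id_comp A := by rcases A with ⟨⟨t, b⟩, hA⟩; simp
  comp_id A := by rcases A with ⟨⟨t, b⟩, hA⟩; simp
  comp_assoc A B C hab hbc := by
    have h1 := congrArg Subtype.val hab
    have h2 := congrArg Subtype.val hbc
    rcases A with ⟨⟨t1, b1⟩, hA⟩
    rcases B with ⟨⟨t2, b2⟩, hB⟩
    rcases C with ⟨⟨t3, b3⟩, hC⟩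
    simp_all
  s_inv A := rfl
  e_inv A := rfl
  inv_comp A := by rcases A with ⟨⟨t, b⟩, hA⟩; simp
  comp_inv A := by rcases A with ⟨⟨t, b⟩, hA⟩; simp

end Construction

section Construction2
variable {P : Type} [Fintype P] [DecidableEq P]

instance (f g : P → Bool) : DecidablePred (BoxCond f g) := fun x => by
  unfold BoxCond; infer_instance

def sqDG (f g : P → Bool) : DoubleGroupoid where
  P := P
  H := Arr f
  V := Arr g
  B := BoxT f g
  gH := arrGpd f
  gV := arrGpd g
  gBh := boxH f g
  gBv := boxV f g
  corner_tl A := rfl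
  corner_tr A := rfl
  corner_bl A := rfl
  corner_br A := rfl
  t_hcomp A B h := by
    have h' := congrArg Subtype.val h
    simp only [boxH, Prod.mk.injEq] at h'
    rcases A with ⟨⟨⟨a1, a2⟩, ⟨a3, a4⟩⟩, hA⟩
    rcases B with ⟨⟨⟨b1, b2⟩, ⟨b3, b4⟩⟩, hB⟩
    simp_all [boxH, boxV, arrGpd]
  b_hcomp A B h := by
    have h' := congrArg Subtype.val h
    simp only [boxH, Prod.mk.injEq] at h'
    rcases A with ⟨⟨⟨a1, a2⟩, ⟨a3, a4⟩⟩, hA⟩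
    rcases B with ⟨⟨⟨b1, b2⟩, ⟨b3, b4⟩⟩, hB⟩
    simp_all [boxH, boxV, arrGpd]
  l_vcomp A B h := by
    have h' := congrArg Subtype.val h
    simp only [boxV] at h'
    rcases A with ⟨⟨⟨a1, a2⟩, ⟨a3, a4⟩⟩, hA⟩
    rcases B with ⟨⟨⟨b1, b2⟩, ⟨b3, b4⟩⟩, hB⟩
    simp_all [boxH, boxV, arrGpd]
  r_vcomp A B h := by
    have h' := congrArg Subtype.val h
    simp only [boxV] at h'
    rcases A with ⟨⟨⟨a1, a2⟩, ⟨a3, a4⟩⟩, hA⟩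
    rcases B with ⟨⟨⟨b1, b2⟩, ⟨b3, b4⟩⟩, hB⟩
    simp_all [boxH, boxV, arrGpd]
  t_idh g' := rfl
  b_idh g' := rfl
  l_idv x := rfl
  r_idv x := rfl
  t_hinv A := rfl
  b_hinv A := rfl
  l_vinv A := rfl
  r_vinv A := rfl
  hinv_vinv A := rfl
  idh_vcomp g' h' hgh := by
    simp only [arrGpd] at hgh
    simp [boxH, boxV, arrGpd, dif_pos hgh]
  idv_hcomp x y hxy := by
    simp only [arrGpd] at hxy
    simp [boxH, boxV, arrGpd, dif_pos hxy]
  id_id p := rfl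
  interchange A B C D hab hcd hac hbd := by
    have h1 := congrArg Subtype.val hab
    have h2 := congrArg Subtype.val hcd
    have h3 := congrArg Subtype.val hac
    have h4 := congrArg Subtype.val hbd
    simp only [boxH, boxV, Prod.mk.injEq] at h1 h2 h3 h4
    rcases A with ⟨⟨⟨a1, a2⟩, ⟨a3, a4⟩⟩, hA⟩
    rcases B with ⟨⟨⟨b1, b2⟩, ⟨b3, b4⟩⟩, hB⟩
    rcases C with ⟨⟨⟨c1, c2⟩, ⟨c3, c4⟩⟩, hC⟩
    rcases D with ⟨⟨⟨d1, d2⟩, ⟨d3, d4⟩⟩, hD⟩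
    simp only [Prod.ext_iff] at h3 h4
    obtain ⟨e1, e2⟩ := h1
    obtain ⟨e3, e4⟩ := h2
    obtain ⟨e5, e6⟩ := h3
    obtain ⟨e7, e8⟩ := h4
    subst_vars
    simp [boxH, boxV]

end Construction2

section Counting
variable {P : Type} [Fintype P] [DecidableEq P]

lemma sqDG_ulc (f g : P → Bool) (A : BoxT f g) :
    (sqDG f g).ulc A = Nat.card {y : P // f A.1.2.1 = f y ∧ g A.1.1.2 = g y} := by
  obtain ⟨⟨⟨a1, a2⟩, a3, a4⟩, hA⟩ := A
  refine Nat.card_congr ⟨fun U => ⟨U.1.1.2.2, ?_, ?_⟩,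
    fun y => ⟨⟨((a1, a2), (a3, y.1)), hA.1, y.2.1, hA.2.2.1, y.2.2⟩, ?_, ?_⟩, ?_, ?_⟩
  · obtain ⟨⟨⟨⟨b1, b2⟩, b3, b4⟩, hb⟩, h1, h2⟩ := U
    have h1' := congrArg Subtype.val h1
    have h2' := congrArg Subtype.val h2
    simp only [sqDG, boxH, boxV, DoubleGroupoid.left, DoubleGroupoid.top,
      Prod.mk.injEq] at h1' h2'
    obtain ⟨e1, e3⟩ := h1'
    obtain ⟨-, e2⟩ := h2'
    subst e1 e2 e3
    exact hb.2.1
  · obtain ⟨⟨⟨⟨b1, b2⟩, b3, b4⟩, hb⟩, h1, h2⟩ := U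
    have h1' := congrArg Subtype.val h1
    have h2' := congrArg Subtype.val h2
    simp only [sqDG, boxH, boxV, DoubleGroupoid.left, DoubleGroupoid.top,
      Prod.mk.injEq] at h1' h2'
    obtain ⟨e1, e3⟩ := h1'
    obtain ⟨-, e2⟩ := h2'
    subst e1 e2 e3
    exact hb.2.2.2
  · exact Subtype.ext rfl
  · exact Subtype.ext rfl
  · rintro ⟨⟨⟨⟨b1, b2⟩, b3, b4⟩, hb⟩, h1, h2⟩
    have h1' := congrArg Subtype.val h1
    have h2' := congrArg Subtype.val h2
    simp only [sqDG, boxH, boxV, DoubleGroupoid.left, DoubleGroupoid.top,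
      Prod.mk.injEq] at h1' h2'
    obtain ⟨e1, e3⟩ := h1'
    obtain ⟨-, e2⟩ := h2'
    subst e1 e2 e3
    rfl
  · rintro ⟨y, hy⟩; rfl

lemma sqDG_llc (f g : P → Bool) (A : BoxT f g) :
    (sqDG f g).llc A = Nat.card {y : P // f A.1.1.1 = f y ∧ g A.1.2.2 = g y} := by
  obtain ⟨⟨⟨a1, a2⟩, a3, a4⟩, hA⟩ := A
  refine Nat.card_congr ⟨fun U => ⟨U.1.1.1.2, ?_, ?_⟩,
    fun y => ⟨⟨((a1, y.1), (a3, a4)), y.2.1, hA.2.1, hA.2.2.1, y.2.2.symm⟩, ?_, ?_⟩, ?_, ?_⟩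
  · obtain ⟨⟨⟨⟨b1, b2⟩, b3, b4⟩, hb⟩, h1, h2⟩ := U
    have h1' := congrArg Subtype.val h1
    have h2' := congrArg Subtype.val h2
    simp only [sqDG, boxH, boxV, DoubleGroupoid.left, DoubleGroupoid.bot,
      Prod.mk.injEq] at h1' h2'
    obtain ⟨e1, e3⟩ := h1'
    obtain ⟨-, e4⟩ := h2'
    subst e1 e3 e4
    exact hb.1
  · obtain ⟨⟨⟨⟨b1, b2⟩, b3, b4⟩, hb⟩, h1, h2⟩ := U
    have h1' := congrArg Subtype.val h1
    have h2' := congrArg Subtype.val h2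
    simp only [sqDG, boxH, boxV, DoubleGroupoid.left, DoubleGroupoid.bot,
      Prod.mk.injEq] at h1' h2'
    obtain ⟨e1, e3⟩ := h1'
    obtain ⟨-, e4⟩ := h2'
    subst e1 e3 e4
    exact hb.2.2.2.symm
  · exact Subtype.ext rfl
  · exact Subtype.ext rfl
  · rintro ⟨⟨⟨⟨b1, b2⟩, b3, b4⟩, hb⟩, h1, h2⟩
    have h1' := congrArg Subtype.val h1
    have h2' := congrArg Subtype.val h2
    simp only [sqDG, boxH, boxV, DoubleGroupoid.left, DoubleGroupoid.bot,
      Prod.mk.injEq] at h1' h2'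
    obtain ⟨e1, e3⟩ := h1'
    obtain ⟨-, e4⟩ := h2'
    subst e1 e3 e4
    rfl
  · rintro ⟨y, hy⟩; rfl

lemma sqDG_filling (f g : P → Bool) (hfill : ∀ b1 b2 : Bool, ∃ y : P, f y = b1 ∧ g y = b2) :
    (sqDG f g).Filling := by
  intro v x hex
  obtain ⟨y, hy1, hy2⟩ := hfill (f v.1.2) (g x.1.1)
  have hex' : x.1.2 = v.1.1 := hex
  refine ⟨⟨((x.1.1, x.1.2), (y, v.1.2)), x.2, by rw [hy1], hy2.symm, by rw [hex', v.2]⟩,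
    Subtype.ext rfl, Subtype.ext ?_⟩
  show (x.1.2, v.1.2) = v.1
  rw [hex']

lemma amap_single (k : Type) [Field k] (T : DoubleGroupoid) (A : T.B) :
    T.amap k (Finsupp.single A 1) =
      ((T.ulc A : k) / (T.llc A : k)) • Finsupp.single (T.tinv A) (1 : k) := by
  simp [DoubleGroupoid.amap]

end Counting

section Concrete

/-- cell sizes: (t,t) ↦ 1 (the point `P`), (t,f) ↦ n+1 (`Q,T₁,…,Tₙ`),
(f,t) ↦ 1 (`R`), (f,f) ↦ m (`S₁,…,Sₘ`) -/
def szfun (m n : ℕ) : Bool × Bool → ℕ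
  | (true, true) => 1
  | (true, false) => n + 1
  | (false, true) => 1
  | (false, false) => m

abbrev Pt (m n : ℕ) := Σ b : Bool × Bool, Fin (szfun m n b)

lemma card_cell (m n : ℕ) (b1 b2 : Bool) :
    Nat.card {y : Pt m n // b1 = y.1.1 ∧ b2 = y.1.2} = szfun m n (b1, b2) := by
  have e : {y : Pt m n // b1 = y.1.1 ∧ b2 = y.1.2} ≃ Fin (szfun m n (b1, b2)) := by
    refine ⟨fun y => ⟨y.1.2.1, ?_⟩, fun j => ⟨⟨(b1, b2), j⟩, rfl, rfl⟩, ?_, ?_⟩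
    · obtain ⟨⟨⟨c1, c2⟩, i⟩, h1, h2⟩ := y
      cases h1; cases h2; exact i.2
    · rintro ⟨⟨⟨c1, c2⟩, i⟩, h1, h2⟩
      cases h1; cases h2; rfl
    · rintro ⟨j, hj⟩; rfl
  rw [Nat.card_congr e, Nat.card_eq_fintype_card, Fintype.card_fin]

end Concrete

namespace Stmt13Proof

variable (m n : ℕ)

def pP (hm : 0 < m) : Pt m n := ⟨(true, true), ⟨0, by simp [szfun]⟩⟩
def pQ (hm : 0 < m) : Pt m n := ⟨(true, false), ⟨0, by simp [szfun]⟩⟩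
def pR (hm : 0 < m) : Pt m n := ⟨(false, true), ⟨0, by simp [szfun]⟩⟩
def pS (hm : 0 < m) : Pt m n := ⟨(false, false), ⟨0, by simpa [szfun] using hm⟩⟩

def fcl : Pt m n → Bool := fun y => y.1.1
def gcl : Pt m n → Bool := fun y => y.1.2

def boxA (hm : 0 < m) : BoxT (fcl m n) (gcl m n) :=
  ⟨((pP m n hm, pQ m n hm), (pR m n hm, pS m n hm)), rfl, rfl, rfl, rfl⟩

end Stmt13Proof

/-- for every positive rational `r = m/(n+1)` there exist a finite
double groupoid `T` satisfying the filling condition and a box `A` with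
`S²(A) = r ⋅ A` in the associated weak Hopf algebra `ℚT`. -/
theorem stmt13 (m n : ℕ) (hm : 0 < m) (hn : 0 < n) :
    ∃ (T : DoubleGroupoid) (A : T.B), T.Filling ∧
      T.amap ℚ (T.amap ℚ (Finsupp.single A 1)) =
        ((m : ℚ) / ((n : ℚ) + 1)) • Finsupp.single A 1 := by
  classical
  open Stmt13Proof in
  refine ⟨sqDG (fcl m n) (gcl m n), boxA m n hm, ?_, ?_⟩
  · refine sqDG_filling _ _ fun b1 b2 => ?_
    refine ⟨⟨(b1, b2), ⟨0, ?_⟩⟩, rfl, rfl⟩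
    rcases b1 <;> rcases b2 <;> simpa [szfun] using hm
  · have hA' : (sqDG (fcl m n) (gcl m n)).tinv
        ((sqDG (fcl m n) (gcl m n)).tinv (boxA m n hm)) = boxA m n hm := rfl
    rw [amap_single ℚ (sqDG (fcl m n) (gcl m n)) (boxA m n hm), LinearMap.map_smul, amap_single, hA', smul_smul]
    congr 1
    rw [sqDG_ulc, sqDG_llc, sqDG_ulc (fcl m n) (gcl m n) ((sqDG (fcl m n) (gcl m n)).tinv (boxA m n hm)),
      sqDG_llc (fcl m n) (gcl m n) ((sqDG (fcl m n) (gcl m n)).tinv (boxA m n hm))]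
    show ((Nat.card {y : Pt m n // false = y.1.1 ∧ false = y.1.2} : ℚ) /
        (Nat.card {y : Pt m n // true = y.1.1 ∧ false = y.1.2} : ℚ)) *
      ((Nat.card {y : Pt m n // true = y.1.1 ∧ true = y.1.2} : ℚ) /
        (Nat.card {y : Pt m n // false = y.1.1 ∧ true = y.1.2} : ℚ)) =
      (m : ℚ) / ((n : ℚ) + 1)
    rw [card_cell, card_cell, card_cell, card_cell]
    simp [szfun]
end

section
/- Let T be a finite double groupoid satisfying the filling condition, with corner function θ: P → ℕ_{>0}. Then for every compatible pair (g, x) ∈ V ×_{t,r} H, the sum over all boxes V with t(V) = x and r(V) = g of 1/θ(bl(V)) equals 1. -/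
namespace Gpd
variable {P A : Type} (G : Gpd P A)

theorem inv_id (p : P) : G.inv (G.id p) = G.id p := by
  have h1 := G.comp_id (G.inv (G.id p))
  rw [G.e_inv, G.s_id] at h1
  have h2 := G.inv_comp (G.id p)
  rw [G.e_id] at h2
  rw [← h1]; exact h2

theorem inv_inv (a : A) : G.inv (G.inv a) = a := by
  have h := G.comp_assoc (G.inv (G.inv a)) (G.inv a) a
    (by rw [G.e_inv]) (by rw [G.e_inv])
  rw [G.inv_comp, G.inv_comp, G.e_inv, G.id_comp] at h
  have he : G.e a = G.e (G.inv (G.inv a)) := by rw [G.e_inv, G.s_inv]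
  rw [he, G.comp_id] at h
  exact h.symm

theorem comp_comp_inv (a b : A) (h : G.e a = G.s b) :
    G.comp (G.comp a b) (G.inv b) = a := by
  rw [G.comp_assoc a b (G.inv b) h (by rw [G.s_inv]), G.comp_inv, ← h, G.comp_id]

theorem inv_comp_comp (a b : A) (h : G.e a = G.s b) :
    G.comp (G.inv a) (G.comp a b) = b := by
  rw [← G.comp_assoc (G.inv a) a b (by rw [G.e_inv]) h, G.inv_comp, h, G.id_comp]

theorem comp_inv_comp (a b : A) (h : G.e a = G.e b) :
    G.comp (G.comp a (G.inv b)) b = a := by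
  rw [G.comp_assoc a (G.inv b) b (by rw [G.s_inv, h]) (by rw [G.e_inv]),
    G.inv_comp, ← h, G.comp_id]

theorem comp_inv_comp_left (a b : A) (h : G.s a = G.s b) :
    G.comp a (G.comp (G.inv a) b) = b := by
  rw [← G.comp_assoc a (G.inv a) b (by rw [G.s_inv]) (by rw [G.e_inv, h]),
    G.comp_inv, h, G.id_comp]

end Gpd

namespace DoubleGroupoid
variable (T : DoubleGroupoid)

theorem left_tinv (A : T.B) : T.gBh.s (T.tinv A) = T.gV.inv (T.gBh.e A) := by
  unfold tinv; rw [T.l_vinv, T.gBh.s_inv]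

theorem right_tinv (A : T.B) : T.gBh.e (T.tinv A) = T.gV.inv (T.gBh.s A) := by
  unfold tinv; rw [T.r_vinv, T.gBh.e_inv]

theorem top_tinv (A : T.B) : T.gBv.s (T.tinv A) = T.gH.inv (T.gBv.e A) := by
  unfold tinv; rw [T.gBv.s_inv, T.b_hinv]

theorem bot_tinv (A : T.B) : T.gBv.e (T.tinv A) = T.gH.inv (T.gBv.s A) := by
  unfold tinv; rw [T.gBv.e_inv, T.t_hinv]

theorem tinv_eq (A : T.B) : T.tinv A = T.gBh.inv (T.gBv.inv A) := (T.hinv_vinv A).symm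

theorem tinv_tinv (A : T.B) : T.tinv (T.tinv A) = A := by
  unfold tinv
  rw [T.hinv_vinv (T.gBh.inv A), T.gBv.inv_inv, T.gBh.inv_inv]

/-- The auxiliary box `C = V ∘ₕ Vʰ`. -/
def boxC (V : T.B) : T.B := T.gBh.comp V (T.gBh.inv V)

theorem compatC (V : T.B) : T.gBh.e V = T.gBh.s (T.gBh.inv V) := (T.gBh.s_inv V).symm

theorem top_C (V : T.B) :
    T.gBv.s (T.boxC V) = T.gH.id (T.gH.s (T.gBv.s V)) := by
  rw [boxC, T.t_hcomp _ _ (T.compatC V), T.t_hinv, T.gH.comp_inv]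

theorem bot_C (V : T.B) :
    T.gBv.e (T.boxC V) = T.gH.id (T.gH.s (T.gBv.e V)) := by
  rw [boxC, T.b_hcomp _ _ (T.compatC V), T.b_hinv, T.gH.comp_inv]

theorem left_C (V : T.B) : T.gBh.s (T.boxC V) = T.gBh.s V := by
  rw [boxC, T.gBh.s_comp _ _ (T.compatC V)]

theorem right_C (V : T.B) : T.gBh.e (T.boxC V) = T.gBh.s V := by
  rw [boxC, T.gBh.e_comp _ _ (T.compatC V), T.gBh.e_inv]

/-- `Φ(U) = (Vᵛ ∘ₕ U⁻¹) ∘ᵥ C`, sending boxes with top/right of `V` to core-`D` boxes. -/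
def phi (V U : T.B) : T.B :=
  T.gBv.comp (T.gBh.comp (T.gBv.inv V) (T.tinv U)) (T.boxC V)

/-- `Ψ(D) = (V⁻¹ ∘ₕ (D ∘ᵥ Cᵛ))⁻¹`, the inverse of `Φ`. -/
def psi (V D : T.B) : T.B :=
  T.tinv (T.gBh.comp (T.tinv V) (T.gBv.comp D (T.gBv.inv (T.boxC V))))

variable (V : T.B)

theorem compat1 (U : T.B) (hU2 : T.gBh.e U = T.gBh.e V) :
    T.gBh.e (T.gBv.inv V) = T.gBh.s (T.tinv U) := by
  rw [T.r_vinv, T.left_tinv, hU2]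

theorem compat3 (U : T.B) (hU1 : T.gBv.s U = T.gBv.s V) (hU2 : T.gBh.e U = T.gBh.e V) :
    T.gBv.e (T.gBh.comp (T.gBv.inv V) (T.tinv U)) = T.gBv.s (T.boxC V) := by
  rw [T.b_hcomp _ _ (T.compat1 V U hU2), T.gBv.e_inv, T.bot_tinv, hU1,
    T.gH.comp_inv, T.top_C]

theorem phi_left (U : T.B) (hU1 : T.gBv.s U = T.gBv.s V) (hU2 : T.gBh.e U = T.gBh.e V) :
    T.gBh.s (T.phi V U) = T.gV.id (T.gH.s (T.gBv.e V)) := by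
  rw [phi, T.l_vcomp _ _ (T.compat3 V U hU1 hU2), T.gBh.s_comp _ _ (T.compat1 V U hU2),
    T.l_vinv, T.left_C, T.gV.inv_comp, T.corner_bl]

theorem phi_bot (U : T.B) (hU1 : T.gBv.s U = T.gBv.s V) (hU2 : T.gBh.e U = T.gBh.e V) :
    T.gBv.e (T.phi V U) = T.gH.id (T.gH.s (T.gBv.e V)) := by
  rw [phi, T.gBv.e_comp _ _ (T.compat3 V U hU1 hU2), T.bot_C]

theorem compatY (D : T.B) (hD2 : T.gBv.e D = T.gH.id (T.gH.s (T.gBv.e V))) :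
    T.gBv.e D = T.gBv.s (T.gBv.inv (T.boxC V)) := by
  rw [T.gBv.s_inv, T.bot_C, hD2]

theorem Y_left (D : T.B) (hD1 : T.gBh.s D = T.gV.id (T.gH.s (T.gBv.e V)))
    (hD2 : T.gBv.e D = T.gH.id (T.gH.s (T.gBv.e V))) :
    T.gBh.s (T.gBv.comp D (T.gBv.inv (T.boxC V))) = T.gV.inv (T.gBh.s V) := by
  rw [T.l_vcomp _ _ (T.compatY V D hD2), hD1, T.l_vinv, T.left_C]
  have hs : T.gV.s (T.gV.inv (T.gBh.s V)) = T.gH.s (T.gBv.e V) := by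
    rw [T.gV.s_inv, ← T.corner_bl]
  rw [← hs, T.gV.id_comp]

theorem Y_bot (D : T.B) (hD2 : T.gBv.e D = T.gH.id (T.gH.s (T.gBv.e V))) :
    T.gBv.e (T.gBv.comp D (T.gBv.inv (T.boxC V))) = T.gH.id (T.gH.s (T.gBv.s V)) := by
  rw [T.gBv.e_comp _ _ (T.compatY V D hD2), T.gBv.e_inv, T.top_C]

theorem compatX (D : T.B) (hD1 : T.gBh.s D = T.gV.id (T.gH.s (T.gBv.e V)))
    (hD2 : T.gBv.e D = T.gH.id (T.gH.s (T.gBv.e V))) :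
    T.gBh.e (T.tinv V) = T.gBh.s (T.gBv.comp D (T.gBv.inv (T.boxC V))) := by
  rw [T.right_tinv, T.Y_left V D hD1 hD2]

theorem psi_top (D : T.B) (hD1 : T.gBh.s D = T.gV.id (T.gH.s (T.gBv.e V)))
    (hD2 : T.gBv.e D = T.gH.id (T.gH.s (T.gBv.e V))) :
    T.gBv.s (T.psi V D) = T.gBv.s V := by
  rw [psi, T.top_tinv, T.b_hcomp _ _ (T.compatX V D hD1 hD2), T.bot_tinv,
    T.Y_bot V D hD2]
  have he : T.gH.s (T.gBv.s V) = T.gH.e (T.gH.inv (T.gBv.s V)) := (T.gH.e_inv _).symm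
  rw [he, T.gH.comp_id, T.gH.inv_inv]

theorem psi_right (D : T.B) (hD1 : T.gBh.s D = T.gV.id (T.gH.s (T.gBv.e V)))
    (hD2 : T.gBv.e D = T.gH.id (T.gH.s (T.gBv.e V))) :
    T.gBh.e (T.psi V D) = T.gBh.e V := by
  rw [psi, T.right_tinv, T.gBh.s_comp _ _ (T.compatX V D hD1 hD2), T.left_tinv,
    T.gV.inv_inv]

theorem psi_phi (U : T.B) (hU1 : T.gBv.s U = T.gBv.s V) (hU2 : T.gBh.e U = T.gBh.e V) :
    T.psi V (T.phi V U) = U := by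
  rw [psi, phi, T.gBv.comp_comp_inv _ _ (T.compat3 V U hU1 hU2), T.tinv_eq V,
    T.gBh.inv_comp_comp _ _ (T.compat1 V U hU2), T.tinv_tinv]

theorem phi_psi (D : T.B) (hD1 : T.gBh.s D = T.gV.id (T.gH.s (T.gBv.e V)))
    (hD2 : T.gBv.e D = T.gH.id (T.gH.s (T.gBv.e V))) :
    T.phi V (T.psi V D) = D := by
  rw [phi, psi, T.tinv_tinv, T.tinv_eq V,
    T.gBh.comp_inv_comp_left _ _ (by rw [T.l_vinv, T.Y_left V D hD1 hD2]),
    T.gBv.comp_inv_comp _ _ (by rw [T.bot_C, hD2])]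

theorem card_key : T.thetaLB (T.bl V) =
    Nat.card {U : T.B // T.gBv.s U = T.gBv.s V ∧ T.gBh.e U = T.gBh.e V} := by
  unfold thetaLB
  apply Nat.card_congr
  exact
    { toFun := fun D => ⟨T.psi V D.1, T.psi_top V D.1 D.2.1 D.2.2,
        T.psi_right V D.1 D.2.1 D.2.2⟩
      invFun := fun U => ⟨T.phi V U.1, T.phi_left V U.1 U.2.1 U.2.2,
        T.phi_bot V U.1 U.2.1 U.2.2⟩
      left_inv := fun D => Subtype.ext (T.phi_psi V D.1 D.2.1 D.2.2)
      right_inv := fun U => Subtype.ext (T.psi_phi V U.1 U.2.1 U.2.2) }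

end DoubleGroupoid


/-- if `T` satisfies the filling condition, then for every compatible
pair `(g,x)` the sum of `1/θ(bl V)` over all boxes `V` with top `x` and right
side `g` equals `1`. -/
theorem stmt18 (T : DoubleGroupoid) (hfill : T.Filling)
    (hpos : ∀ p : T.P, 0 < T.thetaLB p)
    (g : T.V) (x : T.H) (hgx : T.gH.e x = T.gV.s g) :
    ∑ V ∈ Finset.univ.filter (fun V : T.B => T.top V = x ∧ T.right V = g),
      (1 : ℚ) / (T.thetaLB (T.bl V) : ℚ) = 1 := by
  classical
  obtain ⟨A, hA1, hA2⟩ := hfill g x hgx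
  set s := Finset.univ.filter (fun V : T.B => T.top V = x ∧ T.right V = g) with hs
  have hAmem : A ∈ s := by simp [hs, hA1, hA2]
  have hcard : ∀ V ∈ s, T.thetaLB (T.bl V) = s.card := by
    intro V hV
    rw [Finset.mem_filter] at hV
    rw [T.card_key V, Nat.card_eq_fintype_card, Fintype.card_subtype, hs]
    congr 1
    ext U
    have h1 : T.gBv.s V = x := hV.2.1
    have h2 : T.gBh.e V = g := hV.2.2
    simp [DoubleGroupoid.top, DoubleGroupoid.right, h1, h2]
    exact ⟨fun h => Finset.mem_filter.mpr ⟨Finset.mem_univ U, h⟩, fun h => (Finset.mem_filter.mp h).2⟩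
  rw [Finset.sum_congr rfl (fun V hV => by rw [hcard V hV])]
  rw [Finset.sum_const, nsmul_eq_mul, mul_one_div, div_self]
  exact Nat.cast_ne_zero.mpr (Finset.card_pos.mpr ⟨A, hAmem⟩).ne'
end
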